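/- (Maximum Asymptotic Limit for S.) Suppose S, E, I_1, …, I_N : ℝ → ℝ are differentiable, satisfy the SEIR system with N parallel infectious stages for all t ≥ t₀, and S(t), E(t), I_i(t) ≥ 0 for all t ≥ t₀. If U(t₀) = E(t₀) + S* Σ_i (β_i/γ_i) I_i(t₀) > 0 and S(t₀) > S*, then there exists S_∞ with S(t) → S_∞ as t → ∞ and S_∞ < S*; moreover E(t) → 0 and I_i(t) → 0 as t → ∞ for every i = 1, …, N. -/

import Mathlib

open Filter

private lemma antitoneOn_of_derivs {f f' : ℝ → ℝ} {t₀ : ℝ}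
    (hd : ∀ t ≥ t₀, HasDerivAt f (f' t) t) (h0 : ∀ t ≥ t₀, f' t ≤ 0) :
    AntitoneOn f (Set.Ici t₀) := by
  apply antitoneOn_of_deriv_nonpos (convex_Ici t₀)
  · exact fun t ht => (hd t ht).continuousAt.continuousWithinAt
  · intro t ht
    rw [interior_Ici] at ht
    exact ((hd t ht.le).differentiableAt).differentiableWithinAt
  · intro t ht
    rw [interior_Ici] at ht
    rw [(hd t ht.le).deriv]
    exact h0 t ht.le

private lemma monotoneOn_of_derivs {f f' : ℝ → ℝ} {t₀ : ℝ}
    (hd : ∀ t ≥ t₀, HasDerivAt f (f' t) t) (h0 : ∀ t ≥ t₀, 0 ≤ f' t) :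
    MonotoneOn f (Set.Ici t₀) := by
  apply monotoneOn_of_deriv_nonneg (convex_Ici t₀)
  · exact fun t ht => (hd t ht).continuousAt.continuousWithinAt
  · intro t ht
    rw [interior_Ici] at ht
    exact ((hd t ht.le).differentiableAt).differentiableWithinAt
  · intro t ht
    rw [interior_Ici] at ht
    rw [(hd t ht.le).deriv]
    exact h0 t ht.le

private lemma exists_tendsto_of_antitone {f : ℝ → ℝ} {t₀ : ℝ}
    (hf : AntitoneOn f (Set.Ici t₀)) (hnn : ∀ t ≥ t₀, 0 ≤ f t) :
    ∃ L, Tendsto f atTop (nhds L) := by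
  set g : ℝ → ℝ := fun t => f (max t t₀) with hg
  have hganti : Antitone g := fun s t hst =>
    hf (Set.mem_Ici.2 (le_max_right s t₀)) (Set.mem_Ici.2 (le_max_right t t₀))
      (max_le_max hst le_rfl)
  have hbdd : BddBelow (Set.range g) := by
    refine ⟨0, fun y hy => ?_⟩
    obtain ⟨t, rfl⟩ := hy
    exact hnn _ (le_max_right _ _)
  refine ⟨⨅ t, g t, Tendsto.congr' ?_ (tendsto_atTop_ciInf hganti hbdd)⟩
  filter_upwards [eventually_ge_atTop t₀] with t ht
  simp [hg, max_eq_left ht]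

private lemma tendsto_zero_aux {f g G : ℝ → ℝ} {c t₀ L : ℝ} (hc : 0 < c)
    (hf : ∀ t ≥ t₀, HasDerivAt f (g t - c * f t) t)
    (hG : ∀ t ≥ t₀, HasDerivAt G (g t) t)
    (hfnn : ∀ t ≥ t₀, 0 ≤ f t) (hgnn : ∀ t ≥ t₀, 0 ≤ g t)
    (hGL : Tendsto G atTop (nhds L)) :
    Tendsto f atTop (nhds 0) := by
  have hGmono : MonotoneOn G (Set.Ici t₀) := monotoneOn_of_derivs hG hgnn
  have key : ∀ T ≥ t₀, ∀ t ≥ T, f t ≤ Real.exp (c * (T - t)) * f T + (G t - G T) := by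
    intro T hT t ht
    set ψ : ℝ → ℝ := fun s => Real.exp (c * s) * (G s - G T) - Real.exp (c * s) * f s
        + Real.exp (c * T) * f T with hψ
    have hψmono : MonotoneOn ψ (Set.Ici T) := by
      apply monotoneOn_of_derivs (f' := fun s => c * Real.exp (c * s) * (G s - G T))
      · intro s hs
        have hs0 : s ≥ t₀ := le_trans hT hs
        have h1 : HasDerivAt (fun s : ℝ => Real.exp (c * s)) (c * Real.exp (c * s)) s := by
          exact ((Real.hasDerivAt_exp (c * s)).comp s
            ((hasDerivAt_id s).const_mul c)).congr_deriv (by ring)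
        have h2 := h1.mul ((hG s hs0).sub_const (G T))
        have h3 := h1.mul (hf s hs0)
        have h4 := (h2.sub h3).add_const (Real.exp (c * T) * f T)
        refine h4.congr_deriv ?_
        ring
      · intro s hs
        have hs0 : s ≥ t₀ := le_trans hT hs
        have hG' : G T ≤ G s := hGmono (Set.mem_Ici.2 hT) (Set.mem_Ici.2 hs0) hs
        exact mul_nonneg (mul_nonneg hc.le (Real.exp_pos _).le) (sub_nonneg.2 hG')
    have hψT : ψ T = 0 := by simp [hψ]
    have hψt : 0 ≤ ψ t := by
      have := hψmono Set.self_mem_Ici (Set.mem_Ici.2 ht) ht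
      linarith [hψT ▸ this]
    have hsplit : Real.exp (c * T) = Real.exp (c * t) * Real.exp (c * (T - t)) := by
      rw [← Real.exp_add]; ring_nf
    have h5 : Real.exp (c * t) * f t
        ≤ Real.exp (c * t) * (Real.exp (c * (T - t)) * f T + (G t - G T)) := by
      simp only [hψ] at hψt
      rw [hsplit] at hψt
      ring_nf at hψt ⊢
      linarith
    exact le_of_mul_le_mul_left h5 (Real.exp_pos _)
  rw [Metric.tendsto_atTop]
  intro ε hε
  obtain ⟨T1, hT1⟩ := Metric.tendsto_atTop.1 hGL (ε / 4) (by linarith)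
  set T := max T1 t₀ with hT
  have hTt0 : t₀ ≤ T := le_max_right _ _
  have hGbound : ∀ t ≥ T, G t - G T < ε / 2 := by
    intro t ht
    have h1 := hT1 t (le_trans (le_max_left _ _) ht)
    have h2 := hT1 T (le_max_left _ _)
    rw [Real.dist_eq] at h1 h2
    have h1' := abs_lt.1 h1
    have h2' := abs_lt.1 h2
    cases h1' with | intro a b => cases h2' with | intro a2 b2 => linarith
  have hdecay : Tendsto (fun t => Real.exp (c * (T - t)) * f T) atTop (nhds 0) := by
    have hTsub : Tendsto (fun t : ℝ => T - t) atTop atBot := by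
      simpa [sub_eq_add_neg] using tendsto_atBot_add_const_left atTop T tendsto_neg_atTop_atBot
    have h1 : Tendsto (fun t : ℝ => c * (T - t)) atTop atBot := hTsub.const_mul_atBot hc
    have h2 := (Real.tendsto_exp_atBot.comp h1).mul_const (f T)
    simpa using h2
  obtain ⟨T2, hT2⟩ := Metric.tendsto_atTop.1 hdecay (ε / 2) (by linarith)
  refine ⟨max T T2, fun t ht => ?_⟩
  have htT : T ≤ t := le_trans (le_max_left _ _) ht
  have htT2 : T2 ≤ t := le_trans (le_max_right _ _) ht
  have hft : 0 ≤ f t := hfnn t (le_trans hTt0 htT)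
  have hkey := key T hTt0 t htT
  have hd2 := hT2 t htT2
  rw [Real.dist_eq, sub_zero] at hd2 ⊢
  have hexp : Real.exp (c * (T - t)) * f T < ε / 2 := lt_of_abs_lt hd2
  rw [abs_of_nonneg hft]
  have := hGbound t htT
  linarith

/-- Maximum Asymptotic Limit for `S`: if `U(t₀) > 0` and `S(t₀) > S*`,
then `S(t)` converges as `t → ∞` to a limit `S_∞ < S*`, and `E(t) → 0`,
`Iᵢ(t) → 0` for every `i`. -/
theorem stmt_6
    (N : ℕ) [NeZero N]
    (σ : ℝ) (hσ : 0 < σ)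
    (γ β x : Fin N → ℝ)
    (hγ : ∀ i, 0 < γ i) (hβ : ∀ i, 0 < β i) (hx : ∀ i, 0 < x i)
    (hxsum : ∑ i, x i = 1)
    (Sstar : ℝ) (hSstar : Sstar = (∑ i, x i * β i / γ i)⁻¹)
    (S E : ℝ → ℝ) (I : Fin N → ℝ → ℝ) (t₀ : ℝ)
    (hS : ∀ t ≥ t₀, HasDerivAt S (-(∑ i, β i * I i t) * S t) t)
    (hE : ∀ t ≥ t₀, HasDerivAt E ((∑ i, β i * I i t) * S t - σ * E t) t)
    (hI : ∀ i, ∀ t ≥ t₀, HasDerivAt (I i) (x i * σ * E t - γ i * I i t) t)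
    (hSnn : ∀ t ≥ t₀, 0 ≤ S t) (hEnn : ∀ t ≥ t₀, 0 ≤ E t)
    (hInn : ∀ i, ∀ t ≥ t₀, 0 ≤ I i t)
    (hU0 : 0 < E t₀ + Sstar * ∑ i, β i / γ i * I i t₀)
    (hS0 : Sstar < S t₀) :
    (∃ Sinf : ℝ, Tendsto S atTop (nhds Sinf) ∧ Sinf < Sstar) ∧
    Tendsto E atTop (nhds 0) ∧ ∀ i, Tendsto (I i) atTop (nhds 0) := by
  haveI : Nonempty (Fin N) := ⟨⟨0, Nat.pos_of_ne_zero (NeZero.ne N)⟩⟩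
  set b : ℝ → ℝ := fun t => ∑ i, β i * I i t with hb
  have hbnn : ∀ t ≥ t₀, 0 ≤ b t := fun t ht =>
    Finset.sum_nonneg fun i _ => mul_nonneg (hβ i).le (hInn i t ht)
  -- S is antitone and converges
  have hSanti : AntitoneOn S (Set.Ici t₀) :=
    antitoneOn_of_derivs (f' := fun t => -b t * S t) (fun t ht => hS t ht)
      (fun t ht => by
        show -b t * S t ≤ 0
        rw [neg_mul]
        exact neg_nonpos.mpr (mul_nonneg (hbnn t ht) (hSnn t ht)))
  obtain ⟨Sinf, hSlim⟩ := exists_tendsto_of_antitone hSanti hSnn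
  -- S + E is antitone and converges
  have hΦd : ∀ t ≥ t₀, HasDerivAt (fun t => S t + E t) (-(σ * E t)) t := by
    intro t ht
    have h := (hS t ht).add (hE t ht)
    refine h.congr_deriv ?_
    ring
  have hΦanti : AntitoneOn (fun t => S t + E t) (Set.Ici t₀) :=
    antitoneOn_of_derivs (f' := fun t => -(σ * E t)) hΦd
      (fun t ht => neg_nonpos.2 (mul_nonneg hσ.le (hEnn t ht)))
  obtain ⟨LΦ, hΦlim⟩ := exists_tendsto_of_antitone hΦanti
    (fun t ht => add_nonneg (hSnn t ht) (hEnn t ht))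
  -- E → 0
  have hElim : Tendsto E atTop (nhds 0) := by
    refine tendsto_zero_aux (g := fun t => b t * S t) (G := fun t => -S t)
      (c := σ) (t₀ := t₀) hσ (fun t ht => hE t ht) ?_ hEnn
      (fun t ht => mul_nonneg (hbnn t ht) (hSnn t ht)) hSlim.neg
    intro t ht
    have h := (hS t ht).neg
    refine h.congr_deriv ?_
    ring
  -- I i → 0
  have hIlim : ∀ i, Tendsto (I i) atTop (nhds 0) := by
    intro i
    refine tendsto_zero_aux (g := fun t => x i * σ * E t)
      (G := fun t => -x i * (S t + E t)) (c := γ i) (t₀ := t₀) (hγ i)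
      (fun t ht => hI i t ht) ?_ (hInn i)
      (fun t ht => mul_nonneg (mul_nonneg (hx i).le hσ.le) (hEnn t ht))
      (Tendsto.const_mul (-x i) hΦlim)
    intro t ht
    have h := ((hS t ht).add (hE t ht)).const_mul (-x i)
    refine h.congr_deriv ?_
    ring
  -- the function U and its limit
  set U : ℝ → ℝ := fun t => E t + Sstar * ∑ i, β i / γ i * I i t with hUdef
  have hA : (0 : ℝ) < ∑ i, x i * β i / γ i :=
    Finset.sum_pos (fun i _ => by
      have := hγ i; have := hβ i; have := hx i; positivity) Finset.univ_nonempty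
  have hSA : Sstar * ∑ i, x i * β i / γ i = 1 := by
    rw [hSstar]; exact inv_mul_cancel₀ hA.ne'
  have hUd : ∀ t ≥ t₀, HasDerivAt U ((S t - Sstar) * b t) t := by
    intro t ht
    have hsum : HasDerivAt (fun t => ∑ i, β i / γ i * I i t)
        (∑ i, β i / γ i * (x i * σ * E t - γ i * I i t)) t :=
      HasDerivAt.fun_sum fun i _ => (hI i t ht).const_mul (β i / γ i)
    have h := (hE t ht).add (hsum.const_mul Sstar)
    refine h.congr_deriv ?_
    have hinner : ∀ i : Fin N, β i / γ i * (x i * σ * E t - γ i * I i t)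
        = (x i * β i / γ i) * (σ * E t) - β i * I i t := by
      intro i
      field_simp [(hγ i).ne']
    rw [Finset.sum_congr rfl (fun i _ => hinner i), Finset.sum_sub_distrib,
      ← Finset.sum_mul, mul_sub, ← mul_assoc, hSA, one_mul]
    simp only [hb]
    ring
  have hUlim : Tendsto U atTop (nhds 0) := by
    have hsum : Tendsto (fun t => ∑ i, β i / γ i * I i t) atTop (nhds 0) := by
      have h := tendsto_finset_sum (Finset.univ : Finset (Fin N))
        (fun i _ => Tendsto.const_mul (β i / γ i) (hIlim i))
      simpa using h
    have h := hElim.add (Tendsto.const_mul Sstar hsum)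
    simpa using h
  -- S must dip below Sstar
  have ht1 : ∃ t₁ ≥ t₀, S t₁ < Sstar := by
    by_contra hcon
    push_neg at hcon
    have hUmono : MonotoneOn U (Set.Ici t₀) :=
      monotoneOn_of_derivs hUd
        (fun t ht => mul_nonneg (sub_nonneg.2 (hcon t ht)) (hbnn t ht))
    have hge : ∀ᶠ t in atTop, U t₀ ≤ U t := by
      filter_upwards [eventually_ge_atTop t₀] with t ht
      exact hUmono Set.self_mem_Ici (Set.mem_Ici.2 ht) ht
    have hle := ge_of_tendsto hUlim hge
    have hU0' : 0 < U t₀ := hU0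
    linarith
  obtain ⟨t₁, ht₁, hSt₁⟩ := ht1
  have hSinf : Sinf < Sstar := by
    have hle : Sinf ≤ S t₁ := by
      apply le_of_tendsto hSlim
      filter_upwards [eventually_ge_atTop t₁] with t ht
      exact hSanti (Set.mem_Ici.2 ht₁) (Set.mem_Ici.2 (le_trans ht₁ ht)) ht
    linarith
  exact ⟨⟨Sinf, hSlim, hSinf⟩, hElim, hIlim⟩
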